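/- Let (Ω, μ) be a measure space, 1 < p ≤ 2 with conjugate exponent q = p/(p−1), M, N ⊆ L^p(Ω, μ), A : M → L^p(Ω, μ), B : N → L^p(Ω, μ) arbitrary maps, f ∈ M ∩ N, a, b ∈ ℂ. Then for every bounded linear functional φ on L^p(Ω, μ) with ‖φ‖ ≤ 1 and φ(f) = 0: ‖Af − a·f‖_p^p + ‖Bf − b·f‖_p^p ≥ ((1/2)(|φ((A+B)f)|^q + |φ((A−B)f)|^q))^{1/(q−1)}. -/

import Mathlib

open MeasureTheory Real Complex
open Complex.HadamardThreeLines

noncomputable def Complex.abs : AbsoluteValue ℂ ℝ where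
  toFun z := ‖z‖
  map_mul' := norm_mul
  nonneg' := norm_nonneg
  eq_zero' _ := norm_eq_zero
  add_le' := norm_add_le

theorem Complex.norm_eq_abs (z : ℂ) : ‖z‖ = Complex.abs z := rfl

@[simp] theorem Complex.abs_eq_zero_iff' (z : ℂ) : Complex.abs z = 0 ↔ z = 0 := by
  show ‖z‖ = 0 ↔ z = 0
  exact norm_eq_zero

@[simp] theorem Complex.abs_ofReal (r : ℝ) : Complex.abs (r : ℂ) = |r| := by
  show ‖(r : ℂ)‖ = |r|
  simp

@[simp] theorem Complex.abs_conj (z : ℂ) : Complex.abs ((starRingEnd ℂ) z) = Complex.abs z :=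
  Complex.norm_conj z

theorem Complex.abs_abs (z : ℂ) : |Complex.abs z| = Complex.abs z :=
  _root_.abs_of_nonneg (norm_nonneg z)

theorem Complex.sq_abs (z : ℂ) : Complex.abs z ^ 2 = Complex.normSq z := Complex.sq_norm z

theorem Complex.abs_cpow_eq_rpow_re_of_pos {x : ℝ} (hx : 0 < x) (y : ℂ) :
    Complex.abs ((x : ℂ) ^ y) = x ^ y.re := Complex.norm_cpow_eq_rpow_re_of_pos hx y

noncomputable section
namespace MPC

def sgn (z : ℂ) : ℂ := if z = 0 then 0 else z / (Complex.abs z : ℂ)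

lemma abs_sgn_le_one (z : ℂ) : Complex.abs (sgn z) ≤ 1 := by
  unfold sgn
  split
  · simp
  · rename_i h
    rw [map_div₀, Complex.abs_ofReal, abs_abs, div_self (by simpa using h)]

lemma abs_mul_sgn (z : ℂ) : (Complex.abs z : ℂ) * sgn z = z := by
  unfold sgn
  split
  · simp_all
  · rename_i h
    rw [mul_div_cancel₀]
    simpa using h

def E (p : ℝ) (x : ℂ) (ζ : ℂ) : ℂ := ((Complex.abs x : ℂ)) ^ ((p:ℂ) * (1 - ζ/2)) * sgn x

lemma E_diff (p : ℝ) (x : ℂ) : Differentiable ℂ (E p x) := by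
  by_cases h : x = 0
  · have : E p x = fun _ => 0 := by
      funext ζ; simp [E, sgn, h]
    rw [this]; exact differentiable_const 0
  · have hb : (Complex.abs x : ℂ) ≠ 0 := by simpa using h
    apply Differentiable.mul _ (differentiable_const _)
    intro ζ
    exact DifferentiableAt.const_cpow (by fun_prop) (Or.inl hb)

lemma exp_re (p : ℝ) (ζ : ℂ) : ((p:ℂ) * (1 - ζ/2)).re = p * (1 - ζ.re/2) := by
  simp [Complex.mul_re]
  try ring

lemma E_abs {p : ℝ} (hp : 0 < p) (x : ℂ) {ζ : ℂ} (hζ : ζ.re ≤ 1) :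
    Complex.abs (E p x ζ) = (Complex.abs x) ^ (p * (1 - ζ.re/2)) := by
  have hexp : 0 < p * (1 - ζ.re/2) := by nlinarith
  by_cases h : x = 0
  · simp [E, sgn, h, Real.zero_rpow (ne_of_gt hexp)]
  · have hb : (0:ℝ) < Complex.abs x := by simpa [Complex.abs.pos_iff] using h
    rw [E, map_mul, Complex.abs_cpow_eq_rpow_re_of_pos hb, exp_re]
    have : Complex.abs (sgn x) = 1 := by
      unfold sgn
      rw [if_neg h, map_div₀, Complex.abs_ofReal, abs_abs, div_self (ne_of_gt hb)]
    rw [this, mul_one]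

end MPC

namespace MPC2
open MPC

lemma cs2real {u v s t : ℝ} (hu : 0 ≤ u) (hv : 0 ≤ v) (hs : 0 ≤ s) (ht : 0 ≤ t) :
    u*v + s*t ≤ Real.sqrt (u^2+s^2) * Real.sqrt (v^2+t^2) := by
  have key : (u*v+s*t)^2 ≤ (u^2+s^2)*(v^2+t^2) := by nlinarith [sq_nonneg (u*t - s*v)]
  calc u*v+s*t = Real.sqrt ((u*v+s*t)^2) := (Real.sqrt_sq (by positivity)).symm
  _ ≤ Real.sqrt ((u^2+s^2)*(v^2+t^2)) := Real.sqrt_le_sqrt key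
  _ = Real.sqrt (u^2+s^2) * Real.sqrt (v^2+t^2) := Real.sqrt_mul (by positivity) _

lemma parallelogram (a b : ℂ) :
    (Complex.abs (a+b))^2 + (Complex.abs (a-b))^2 = 2*((Complex.abs a)^2 + (Complex.abs b)^2) := by
  simp only [Complex.sq_abs, Complex.normSq_apply, Complex.add_re, Complex.add_im,
    Complex.sub_re, Complex.sub_im]
  ring

lemma cs2 (a b c d : ℂ) : Complex.abs (a*c + b*d) ≤
    Real.sqrt ((Complex.abs a)^2 + (Complex.abs b)^2) *
    Real.sqrt ((Complex.abs c)^2 + (Complex.abs d)^2) := by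
  calc Complex.abs (a*c + b*d) ≤ Complex.abs (a*c) + Complex.abs (b*d) := Complex.abs.add_le _ _
  _ = Complex.abs a * Complex.abs c + Complex.abs b * Complex.abs d := by rw [map_mul, map_mul]
  _ ≤ _ := cs2real (Complex.abs.nonneg a) (Complex.abs.nonneg c)
        (Complex.abs.nonneg b) (Complex.abs.nonneg d)

lemma coord_le_one {p r s : ℝ} (hp : 0 < p) (hr : 0 ≤ r) (hs : 0 ≤ s)
    (h : r ^ p + s ^ p ≤ 1) : r ≤ 1 := by
  by_contra hcon
  push_neg at hcon
  have h1 : (1:ℝ) < r ^ p := by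
    calc (1:ℝ) = 1 ^ p := (Real.one_rpow p).symm
    _ < r ^ p := Real.rpow_lt_rpow (by norm_num) hcon hp
  have h2 : (0:ℝ) ≤ s ^ p := Real.rpow_nonneg hs p
  linarith

lemma bilinear (p q : ℝ) (hp1 : 1 < p) (hp2 : p ≤ 2) (hq : q = p/(p-1))
    (x1 x2 y1 y2 : ℂ)
    (hx : Complex.abs x1 ^ p + Complex.abs x2 ^ p ≤ 1)
    (hy : Complex.abs y1 ^ p + Complex.abs y2 ^ p ≤ 1) :
    Complex.abs ((x1+x2)*y1 + (x1-x2)*y2) ≤ 2 ^ (1/q) := by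
  have hp0 : 0 < p := by linarith
  have hpm : 0 < p - 1 := by linarith
  have hq2 : 2 ≤ q := by
    rw [hq, le_div_iff₀ hpm]; nlinarith
  have hq0 : 0 < q := by linarith
  set θ : ℝ := 2/q with hθ
  have hθ0 : 0 < θ := by positivity
  have hθ1 : θ ≤ 1 := by
    rw [hθ, div_le_one hq0]; linarith
  set G : ℂ → ℂ := fun ζ => (E p x1 ζ + E p x2 ζ) * E p y1 ζ + (E p x1 ζ - E p x2 ζ) * E p y2 ζ
    with hG
  have hd : DiffContOnCl ℂ G (verticalStrip 0 1) := by
    apply Differentiable.diffContOnCl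
    exact (((E_diff p x1).add (E_diff p x2)).mul (E_diff p y1)).add
      (((E_diff p x1).sub (E_diff p x2)).mul (E_diff p y2))
  -- abs bounds of coordinates
  have hx1 : Complex.abs x1 ≤ 1 := coord_le_one hp0 (Complex.abs.nonneg _) (Complex.abs.nonneg _) hx
  have hx2 : Complex.abs x2 ≤ 1 := by
    apply coord_le_one hp0 (Complex.abs.nonneg x2) (Complex.abs.nonneg x1)
    linarith
  have hy1 : Complex.abs y1 ≤ 1 := coord_le_one hp0 (Complex.abs.nonneg _) (Complex.abs.nonneg _) hy
  have hy2 : Complex.abs y2 ≤ 1 := by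
    apply coord_le_one hp0 (Complex.abs.nonneg y2) (Complex.abs.nonneg y1)
    linarith
  have hEle : ∀ (x : ℂ), Complex.abs x ≤ 1 → ∀ ζ : ℂ, 0 ≤ ζ.re → ζ.re ≤ 1 →
      Complex.abs (E p x ζ) ≤ 1 := by
    intro x hxle ζ h0 h1
    rw [E_abs hp0 x h1]
    exact Real.rpow_le_one (Complex.abs.nonneg x) hxle (by nlinarith)
  have hB : BddAbove ((norm ∘ G) '' (verticalClosedStrip 0 1)) := by
    refine ⟨4, ?_⟩
    rintro r ⟨ζ, hζ, rfl⟩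
    have h0 : 0 ≤ ζ.re := hζ.1
    have h1 : ζ.re ≤ 1 := hζ.2
    simp only [Function.comp_apply, Complex.norm_eq_abs, hG]
    calc Complex.abs ((E p x1 ζ + E p x2 ζ) * E p y1 ζ + (E p x1 ζ - E p x2 ζ) * E p y2 ζ)
        ≤ Complex.abs ((E p x1 ζ + E p x2 ζ) * E p y1 ζ)
          + Complex.abs ((E p x1 ζ - E p x2 ζ) * E p y2 ζ) := Complex.abs.add_le _ _
      _ = Complex.abs (E p x1 ζ + E p x2 ζ) * Complex.abs (E p y1 ζ)
          + Complex.abs (E p x1 ζ - E p x2 ζ) * Complex.abs (E p y2 ζ) := by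
            rw [map_mul, map_mul]
      _ ≤ (Complex.abs (E p x1 ζ) + Complex.abs (E p x2 ζ)) * Complex.abs (E p y1 ζ)
          + (Complex.abs (E p x1 ζ) + Complex.abs (E p x2 ζ)) * Complex.abs (E p y2 ζ) := by
            gcongr
            · exact Complex.abs.add_le _ _
            · simpa [Complex.norm_eq_abs] using norm_sub_le (E p x1 ζ) (E p x2 ζ)
      _ ≤ (1 + 1) * 1 + (1 + 1) * 1 := by
            gcongr <;>
              first
                | exact hEle x1 hx1 ζ h0 h1
                | exact hEle x2 hx2 ζ h0 h1
                | exact hEle y1 hy1 ζ h0 h1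
                | exact hEle y2 hy2 ζ h0 h1
                | positivity
      _ = 4 := by norm_num
  have triangle : ∀ ζ : ℂ, Complex.abs (G ζ) ≤
      (Complex.abs (E p x1 ζ) + Complex.abs (E p x2 ζ)) * Complex.abs (E p y1 ζ)
      + (Complex.abs (E p x1 ζ) + Complex.abs (E p x2 ζ)) * Complex.abs (E p y2 ζ) := by
    intro ζ
    calc Complex.abs (G ζ)
        ≤ Complex.abs ((E p x1 ζ + E p x2 ζ) * E p y1 ζ)
          + Complex.abs ((E p x1 ζ - E p x2 ζ) * E p y2 ζ) := Complex.abs.add_le _ _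
      _ = Complex.abs (E p x1 ζ + E p x2 ζ) * Complex.abs (E p y1 ζ)
          + Complex.abs (E p x1 ζ - E p x2 ζ) * Complex.abs (E p y2 ζ) := by
            rw [map_mul, map_mul]
      _ ≤ _ := by
            gcongr
            · exact Complex.abs.add_le _ _
            · simpa [Complex.norm_eq_abs] using norm_sub_le (E p x1 ζ) (E p x2 ζ)
  have ha : ∀ ζ ∈ Complex.re ⁻¹' {0}, ‖G ζ‖ ≤ 1 := by
    intro ζ hζ
    have h0 : ζ.re = 0 := hζ
    have hEa : ∀ x : ℂ, Complex.abs (E p x ζ) = Complex.abs x ^ p := by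
      intro x
      rw [E_abs hp0 x (by rw [h0]; norm_num), h0]
      norm_num
    simp only [Complex.norm_eq_abs]
    calc Complex.abs (G ζ)
        ≤ (Complex.abs (E p x1 ζ) + Complex.abs (E p x2 ζ)) * Complex.abs (E p y1 ζ)
          + (Complex.abs (E p x1 ζ) + Complex.abs (E p x2 ζ)) * Complex.abs (E p y2 ζ) :=
          triangle ζ
      _ = (Complex.abs x1 ^ p + Complex.abs x2 ^ p)
            * (Complex.abs y1 ^ p + Complex.abs y2 ^ p) := by
            rw [hEa x1, hEa x2, hEa y1, hEa y2]; ring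
      _ ≤ 1 := mul_le_one₀ hx (by positivity) hy
  have hb : ∀ ζ ∈ Complex.re ⁻¹' {1}, ‖G ζ‖ ≤ Real.sqrt 2 := by
    intro ζ hζ
    have h0 : ζ.re = 1 := hζ
    have hEa : ∀ x : ℂ, Complex.abs (E p x ζ) = Complex.abs x ^ (p/2) := by
      intro x
      rw [E_abs hp0 x (le_of_eq h0), h0]
      norm_num [mul_one_div]
    have hsq : ∀ x : ℂ, (Complex.abs (E p x ζ))^2 = Complex.abs x ^ p := by
      intro x
      rw [hEa x, ← Real.rpow_natCast (Complex.abs x ^ (p/2)) 2,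
        ← Real.rpow_mul (Complex.abs.nonneg x)]
      norm_num
    simp only [Complex.norm_eq_abs]
    calc Complex.abs (G ζ)
        ≤ Real.sqrt ((Complex.abs (E p x1 ζ + E p x2 ζ))^2
              + (Complex.abs (E p x1 ζ - E p x2 ζ))^2)
          * Real.sqrt ((Complex.abs (E p y1 ζ))^2 + (Complex.abs (E p y2 ζ))^2) :=
          cs2 _ _ _ _
      _ = Real.sqrt (2 * (Complex.abs x1 ^ p + Complex.abs x2 ^ p))
          * Real.sqrt (Complex.abs y1 ^ p + Complex.abs y2 ^ p) := by
            rw [parallelogram, hsq x1, hsq x2, hsq y1, hsq y2]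
      _ ≤ Real.sqrt (2 * 1) * Real.sqrt 1 := by
            have e1 : Real.sqrt (2 * (Complex.abs x1 ^ p + Complex.abs x2 ^ p)) ≤ Real.sqrt (2*1) :=
              Real.sqrt_le_sqrt (by linarith)
            have e2 : Real.sqrt (Complex.abs y1 ^ p + Complex.abs y2 ^ p) ≤ Real.sqrt 1 :=
              Real.sqrt_le_sqrt hy
            exact mul_le_mul e1 e2 (Real.sqrt_nonneg _) (Real.sqrt_nonneg _)
      _ = Real.sqrt 2 := by
            rw [mul_one, Real.sqrt_one, mul_one]
  have hzmem : (θ:ℂ) ∈ verticalClosedStrip 0 1 := by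
    simp only [verticalClosedStrip, Set.mem_preimage, Complex.ofReal_re, Set.mem_Icc]
    exact ⟨le_of_lt hθ0, hθ1⟩
  have h3 := norm_le_interp_of_mem_verticalClosedStrip₀₁' G hzmem hd hB ha hb
  have hEθ : ∀ x : ℂ, E p x (θ:ℂ) = x := by
    intro x
    have hexpR : p * (1 - θ/2) = 1 := by
      have : θ/2 = 1/q := by rw [hθ]; ring
      rw [this, hq]
      field_simp
      ring
    have hexp : (p:ℂ) * (1 - (θ:ℂ)/2) = 1 := by
      have h1 : (1:ℂ) - (θ:ℂ)/2 = ((1 - θ/2 : ℝ) : ℂ) := by push_cast; ring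
      rw [h1, ← Complex.ofReal_mul, hexpR, Complex.ofReal_one]
    rw [E, hexp, Complex.cpow_one, abs_mul_sgn]
  have hGθ : G (θ:ℂ) = (x1+x2)*y1 + (x1-x2)*y2 := by
    simp only [hG, hEθ]
  rw [hGθ] at h3
  have hre : ((θ:ℂ)).re = θ := Complex.ofReal_re θ
  rw [hre, Real.one_rpow, one_mul] at h3
  have hs2 : Real.sqrt 2 ^ θ = (2:ℝ) ^ (1/q) := by
    rw [Real.sqrt_eq_rpow, ← Real.rpow_mul (by norm_num : (0:ℝ) ≤ 2)]
    congr 1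
    rw [hθ]; ring
  rw [hs2] at h3
  simpa [Complex.norm_eq_abs] using h3


end MPC2

namespace MPC3
open MPC MPC2

lemma clarkson_normalized (p q : ℝ) (hp1 : 1 < p) (hp2 : p ≤ 2) (hq : q = p/(p-1))
    (x1 x2 : ℂ) (hx : Complex.abs x1 ^ p + Complex.abs x2 ^ p ≤ 1) :
    Complex.abs (x1+x2) ^ q + Complex.abs (x1-x2) ^ q ≤ 2 := by
  have hp0 : 0 < p := by linarith
  have hpm : 0 < p - 1 := by linarith
  have hq2 : 2 ≤ q := by rw [hq, le_div_iff₀ hpm]; nlinarith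
  have hq0 : 0 < q := by linarith
  set a : ℂ := x1 + x2 with ha
  set b : ℂ := x1 - x2 with hb
  set A : ℝ := Complex.abs a with hA
  set Bv : ℝ := Complex.abs b with hBv
  set N' : ℝ := A ^ q + Bv ^ q with hN'
  by_cases hNpos : 0 < N'
  case neg =>
    have h1 : 0 ≤ A ^ q := Real.rpow_nonneg (Complex.abs.nonneg _) _
    have h2 : 0 ≤ Bv ^ q := Real.rpow_nonneg (Complex.abs.nonneg _) _
    push_neg at hNpos
    have : N' = 0 := le_antisymm hNpos (by positivity)
    rw [← hN'] at *
    linarith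
  case pos =>
  set N : ℝ := N' ^ (1/p) with hN
  have hNp : 0 < N := Real.rpow_pos_of_pos hNpos _
  set y1 : ℂ := (starRingEnd ℂ) a * ((A ^ (q-2) : ℝ) : ℂ) / (N:ℂ) with hy1
  set y2 : ℂ := (starRingEnd ℂ) b * ((Bv ^ (q-2) : ℝ) : ℂ) / (N:ℂ) with hy2
  -- key product identity
  have key1 : ∀ z : ℂ, z * ((starRingEnd ℂ) z * ((Complex.abs z ^ (q-2) : ℝ) : ℂ)) =
      ((Complex.abs z ^ q : ℝ) : ℂ) := by
    intro z
    by_cases h : z = 0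
    · simp [h, Real.zero_rpow (ne_of_gt hq0)]
    · have hAz : 0 < Complex.abs z := by simpa [Complex.abs.pos_iff] using h
      rw [← mul_assoc, Complex.mul_conj, ← Complex.sq_abs, ← Complex.ofReal_mul]
      congr 1
      rw [← Real.rpow_natCast (Complex.abs z) 2, ← Real.rpow_add hAz]
      norm_num
  have absdual : ∀ z : ℂ, Complex.abs ((starRingEnd ℂ) z * ((Complex.abs z ^ (q-2) : ℝ) : ℂ)) =
      Complex.abs z ^ (q-1) := by
    intro z
    by_cases h : z = 0
    · simp [h, Real.zero_rpow (show q - 1 ≠ 0 by linarith)]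
    · have hAz : 0 < Complex.abs z := by simpa [Complex.abs.pos_iff] using h
      rw [map_mul, Complex.abs_conj, Complex.abs_ofReal,
        _root_.abs_of_nonneg (Real.rpow_nonneg (Complex.abs.nonneg z) _)]
      nth_rewrite 1 [← Real.rpow_one (Complex.abs z)]
      rw [← Real.rpow_add hAz]
      congr 1
      ring
  have hNpow : N ^ p = N' := by
    rw [hN, ← Real.rpow_mul (le_of_lt hNpos), one_div_mul_cancel (ne_of_gt hp0), Real.rpow_one]
  have hqp : (q-1)*p = q := by rw [hq]; field_simp; ring
  have hyabs : ∀ z : ℂ, Complex.abs ((starRingEnd ℂ) z * ((Complex.abs z ^ (q-2) : ℝ) : ℂ) / (N:ℂ))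
      ^ p = Complex.abs z ^ q / N' := by
    intro z
    rw [map_div₀, absdual z, Complex.abs_ofReal, _root_.abs_of_nonneg (le_of_lt hNp),
      Real.div_rpow (Real.rpow_nonneg (Complex.abs.nonneg z) _) (le_of_lt hNp),
      ← Real.rpow_mul (Complex.abs.nonneg z), hqp, hNpow]
  have hy : Complex.abs y1 ^ p + Complex.abs y2 ^ p ≤ 1 := by
    rw [hy1, hy2, hyabs a, hyabs b, ← add_div, ← hN']
    rw [div_self (ne_of_gt hNpos)]
  have hbil := bilinear p q hp1 hp2 hq x1 x2 y1 y2 hx hy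
  have hsum : (x1+x2)*y1 + (x1-x2)*y2 = (((N'/N) : ℝ) : ℂ) := by
    have expand : (x1+x2)*y1 + (x1-x2)*y2
        = (a * ((starRingEnd ℂ) a * ((A ^ (q-2) : ℝ) : ℂ))
          + b * ((starRingEnd ℂ) b * ((Bv ^ (q-2) : ℝ) : ℂ))) / (N:ℂ) := by
      rw [hy1, hy2, ← ha, ← hb]; ring
    rw [expand, key1 a, key1 b, ← Complex.ofReal_add, ← hA, ← hBv, ← hN', Complex.ofReal_div]
  rw [hsum, Complex.abs_ofReal, _root_.abs_of_nonneg (by positivity)] at hbil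
  have hdivN : N'/N = N' ^ (1/q) := by
    rw [hN]
    nth_rewrite 1 [← Real.rpow_one N']
    rw [← Real.rpow_sub hNpos]
    congr 1
    rw [hq]
    field_simp
  rw [hdivN] at hbil
  -- raise to power q
  have := Real.rpow_le_rpow (Real.rpow_nonneg (le_of_lt hNpos) _) hbil (le_of_lt hq0)
  rw [← Real.rpow_mul (le_of_lt hNpos), ← Real.rpow_mul (by norm_num : (0:ℝ) ≤ 2),
    one_div_mul_cancel (ne_of_gt hq0), Real.rpow_one, Real.rpow_one] at this
  exact this

lemma clarkson_scalar (p q : ℝ) (hp1 : 1 < p) (hp2 : p ≤ 2) (hq : q = p/(p-1)) (z w : ℂ) :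
    Complex.abs (z+w) ^ q + Complex.abs (z-w) ^ q ≤
      2 * (Complex.abs z ^ p + Complex.abs w ^ p) ^ (q/p) := by
  have hp0 : 0 < p := by linarith
  have hpm : 0 < p - 1 := by linarith
  have hq2 : 2 ≤ q := by rw [hq, le_div_iff₀ hpm]; nlinarith
  have hq0 : 0 < q := by linarith
  set T : ℝ := Complex.abs z ^ p + Complex.abs w ^ p with hT
  by_cases hTpos : 0 < T
  case neg =>
    push_neg at hTpos
    have h1 : 0 ≤ Complex.abs z ^ p := Real.rpow_nonneg (Complex.abs.nonneg _) _
    have h2 : 0 ≤ Complex.abs w ^ p := Real.rpow_nonneg (Complex.abs.nonneg _) _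
    have hz0 : Complex.abs z ^ p = 0 := by linarith
    have hw0 : Complex.abs w ^ p = 0 := by linarith
    have hz' : z = 0 := by
      by_contra hcon
      have : 0 < Complex.abs z := by simpa [Complex.abs.pos_iff] using hcon
      exact absurd hz0 (ne_of_gt (Real.rpow_pos_of_pos this p))
    have hw' : w = 0 := by
      by_contra hcon
      have : 0 < Complex.abs w := by simpa [Complex.abs.pos_iff] using hcon
      exact absurd hw0 (ne_of_gt (Real.rpow_pos_of_pos this p))
    subst hz' hw'
    simp [Real.zero_rpow (ne_of_gt hq0)]
    positivity
  case pos =>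
  set S : ℝ := T ^ (1/p) with hS
  have hSp : 0 < S := Real.rpow_pos_of_pos hTpos _
  have hSpow : S ^ p = T := by
    rw [hS, ← Real.rpow_mul (le_of_lt hTpos), one_div_mul_cancel (ne_of_gt hp0), Real.rpow_one]
  have habsdiv : ∀ u : ℂ, Complex.abs (u / (S:ℂ)) ^ p = Complex.abs u ^ p / T := by
    intro u
    rw [map_div₀, Complex.abs_ofReal, _root_.abs_of_nonneg (le_of_lt hSp),
      Real.div_rpow (Complex.abs.nonneg u) (le_of_lt hSp), hSpow]
  have hnorm := clarkson_normalized p q hp1 hp2 hq (z / (S:ℂ)) (w / (S:ℂ)) (by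
    rw [habsdiv z, habsdiv w, ← add_div, ← hT, div_self (ne_of_gt hTpos)])
  rw [← add_div, ← sub_div] at hnorm
  have hTq : 0 < T ^ (q/p) := Real.rpow_pos_of_pos hTpos _
  have habsdivq : ∀ u : ℂ, Complex.abs (u / (S:ℂ)) ^ q = Complex.abs u ^ q / T ^ (q/p) := by
    intro u
    rw [map_div₀, Complex.abs_ofReal, _root_.abs_of_nonneg (le_of_lt hSp),
      Real.div_rpow (Complex.abs.nonneg u) (le_of_lt hSp), hS,
      ← Real.rpow_mul (le_of_lt hTpos)]
    congr 2
    ring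
  rw [habsdivq (z+w), habsdivq (z-w), ← add_div, div_le_iff₀ hTq] at hnorm
  linarith

end MPC3

end

theorem nonlinear_maccone_pati_clarkson_conj_le_two
    {Ω : Type*} [MeasurableSpace Ω] (μ : Measure Ω) (p q : ℝ) (hp1 : 1 < p) (hp2 : p ≤ 2)
    (hq : q = p / (p - 1)) [Fact (1 ≤ ENNReal.ofReal p)]
    (M N : Set (Lp ℂ (ENNReal.ofReal p) μ))
    (A : M → Lp ℂ (ENNReal.ofReal p) μ) (B : N → Lp ℂ (ENNReal.ofReal p) μ)
    (f : Lp ℂ (ENNReal.ofReal p) μ) (hfM : f ∈ M) (hfN : f ∈ N) (a b : ℂ)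
    (φ : Lp ℂ (ENNReal.ofReal p) μ →L[ℂ] ℂ) (hφ : ‖φ‖ ≤ 1) (hφf : φ f = 0) :
    ‖A ⟨f, hfM⟩ - a • f‖ ^ p + ‖B ⟨f, hfN⟩ - b • f‖ ^ p ≥
      ((1 / 2) *
        (‖φ (A ⟨f, hfM⟩ + B ⟨f, hfN⟩)‖ ^ q + ‖φ (A ⟨f, hfM⟩ - B ⟨f, hfN⟩)‖ ^ q))
          ^ (1 / (q - 1)) := by
  have hp0 : 0 < p := by linarith
  have hpm : 0 < p - 1 := by linarith
  have hq2 : 2 ≤ q := by rw [hq, le_div_iff₀ hpm]; nlinarith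
  have hq0 : 0 < q := by linarith
  set u := A ⟨f, hfM⟩ - a • f with hu
  set v := B ⟨f, hfN⟩ - b • f with hv
  have e1 : φ (A ⟨f, hfM⟩ + B ⟨f, hfN⟩) = φ u + φ v := by
    have h : A ⟨f, hfM⟩ + B ⟨f, hfN⟩ = u + v + (a+b) • f := by
      rw [hu, hv]; module
    rw [h, map_add, map_add, _root_.map_smul, hφf, smul_zero, add_zero]
  have e2 : φ (A ⟨f, hfM⟩ - B ⟨f, hfN⟩) = φ u - φ v := by
    have h : A ⟨f, hfM⟩ - B ⟨f, hfN⟩ = u - v + (a-b) • f := by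
      rw [hu, hv]; module
    rw [h, map_add, map_sub, _root_.map_smul, hφf, smul_zero, add_zero]
  rw [e1, e2, ge_iff_le]
  have hα : ‖φ u‖ ≤ ‖u‖ := by
    calc ‖φ u‖ ≤ ‖φ‖ * ‖u‖ := φ.le_opNorm u
    _ ≤ 1 * ‖u‖ := mul_le_mul_of_nonneg_right hφ (norm_nonneg u)
    _ = ‖u‖ := one_mul _
  have hβ : ‖φ v‖ ≤ ‖v‖ := by
    calc ‖φ v‖ ≤ ‖φ‖ * ‖v‖ := φ.le_opNorm v
    _ ≤ 1 * ‖v‖ := mul_le_mul_of_nonneg_right hφ (norm_nonneg v)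
    _ = ‖v‖ := one_mul _
  have hcs := MPC3.clarkson_scalar p q hp1 hp2 hq (φ u) (φ v)
  set T : ℝ := ‖u‖ ^ p + ‖v‖ ^ p with hT
  have hT0 : 0 ≤ T := by positivity
  have mono : (Complex.abs (φ u) ^ p + Complex.abs (φ v) ^ p) ^ (q/p) ≤ T ^ (q/p) := by
    apply Real.rpow_le_rpow (by positivity) _ (by positivity)
    have m1 : Complex.abs (φ u) ^ p ≤ ‖u‖ ^ p :=
      Real.rpow_le_rpow (Complex.abs.nonneg _) (by rw [← Complex.norm_eq_abs]; exact hα)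
        (le_of_lt hp0)
    have m2 : Complex.abs (φ v) ^ p ≤ ‖v‖ ^ p :=
      Real.rpow_le_rpow (Complex.abs.nonneg _) (by rw [← Complex.norm_eq_abs]; exact hβ)
        (le_of_lt hp0)
    rw [hT]
    linarith
  have hX : ‖φ u + φ v‖ ^ q + ‖φ u - φ v‖ ^ q ≤ 2 * T ^ (q/p) := by
    rw [Complex.norm_eq_abs, Complex.norm_eq_abs]
    calc Complex.abs (φ u + φ v) ^ q + Complex.abs (φ u - φ v) ^ q
        ≤ 2 * (Complex.abs (φ u) ^ p + Complex.abs (φ v) ^ p) ^ (q/p) := hcs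
      _ ≤ 2 * T ^ (q/p) := by linarith
  have hhalf : (1/2) * (‖φ u + φ v‖ ^ q + ‖φ u - φ v‖ ^ q) ≤ T ^ (q/p) := by linarith
  have hXnn : 0 ≤ (1/2) * (‖φ u + φ v‖ ^ q + ‖φ u - φ v‖ ^ q) := by positivity
  calc ((1/2) * (‖φ u + φ v‖ ^ q + ‖φ u - φ v‖ ^ q)) ^ (1/(q-1))
      ≤ (T ^ (q/p)) ^ (1/(q-1)) :=
        Real.rpow_le_rpow hXnn hhalf (by
          have h2 : (0:ℝ) < q - 1 := by linarith
          positivity)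
    _ = T ^ ((q/p) * (1/(q-1))) := (Real.rpow_mul hT0 _ _).symm
    _ = T ^ (1:ℝ) := by
        congr 1
        have hqe : q * (p - 1) = p := by rw [hq]; field_simp
        have h2 : q - 1 ≠ 0 := by intro h; linarith [sub_eq_zero.mp h]
        field_simp
        nlinarith [hqe]
    _ = T := Real.rpow_one T
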